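/- Let G be a finite simple graph, let S, T ⊆ V(G) be disjoint sets admitting a left-restricted (S,T)-separator, and let P⁺ be a farthest minimum left-restricted (S,T)-separator, i.e., a minimum-size left-restricted (S,T)-separator such that R_G(S,P) ⊆ R_G(S,P⁺) for every minimum-size left-restricted (S,T)-separator P. Then for every vertex v ∈ V(G): λ^L_G(S ∪ {v}, T) > λ^L_G(S,T) if and only if v ∈ R_G(T,P⁺) ∪ P⁺. -/

import Mathlib

open SimpleGraph

/-- `u` can reach `v` in `G` by a walk whose support stays inside `A`. -/
def ReachIn {V : Type} (G : SimpleGraph V) (A : Set V) (u v : V) : Prop :=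
  ∃ w : G.Walk u v, ∀ x ∈ w.support, x ∈ A

/-- The set of vertices reachable in `G − P` from a vertex of `S \ P`. -/
def reachSet {V : Type} (G : SimpleGraph V) (S P : Set V) : Set V :=
  {v | ∃ s ∈ S \ P, ReachIn G Pᶜ s v}

/-- `P` is an unrestricted `(S,T)`-separator: no vertex of `S \ P` reaches a
vertex of `T \ P` in `G − P`. -/
def IsSep {V : Type} (G : SimpleGraph V) (S T P : Set V) : Prop :=
  ∀ s ∈ S \ P, ∀ t ∈ T \ P, ¬ ReachIn G Pᶜ s t

/-- A left-restricted `(S,T)`-separator additionally avoids `S`. -/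
def IsLeftSep {V : Type} (G : SimpleGraph V) (S T P : Set V) : Prop :=
  IsSep G S T P ∧ P ∩ S = ∅

/-- A minimum-size left-restricted `(S,T)`-separator. -/
def IsMinLeftSep {V : Type} (G : SimpleGraph V) (S T P : Set V) : Prop :=
  IsLeftSep G S T P ∧ ∀ Q : Set V, IsLeftSep G S T Q → P.ncard ≤ Q.ncard

/-- `λ^L_G(S,T)`: the minimum size of a left-restricted `(S,T)`-separator,
`⊤` (i.e. `+∞`) if none exists. -/
noncomputable def lamL {V : Type} (G : SimpleGraph V) (S T : Set V) : ℕ∞ :=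
  ⨅ (P : Set V) (_ : IsLeftSep G S T P), (P.ncard : ℕ∞)

section helpers
variable {V : Type} {G : SimpleGraph V}

lemma reachIn_refl {A : Set V} {a : V} (ha : a ∈ A) : ReachIn G A a a :=
  ⟨Walk.nil, by simpa using ha⟩

lemma reachIn_trans {A : Set V} {a b c : V} (h1 : ReachIn G A a b) (h2 : ReachIn G A b c) :
    ReachIn G A a c := by
  obtain ⟨w1, hw1⟩ := h1
  obtain ⟨w2, hw2⟩ := h2
  refine ⟨w1.append w2, fun x hx => ?_⟩
  rcases (Walk.mem_support_append_iff w1 w2).mp hx with h | h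
  · exact hw1 x h
  · exact hw2 x h

lemma reachIn_reverse {A : Set V} {a b : V} (h : ReachIn G A a b) : ReachIn G A b a := by
  obtain ⟨w, hw⟩ := h
  exact ⟨w.reverse, fun x hx => hw x (by simpa [Walk.support_reverse] using hx)⟩

lemma reachIn_adj {A : Set V} {a b c : V} (h : ReachIn G A a b) (hadj : G.Adj b c)
    (hc : c ∈ A) : ReachIn G A a c := by
  obtain ⟨w, hw⟩ := h
  have hb : b ∈ A := hw b w.end_mem_support
  refine reachIn_trans ⟨w, hw⟩ ⟨Walk.cons hadj Walk.nil, ?_⟩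
  intro x hx
  simp [Walk.support_cons] at hx
  rcases hx with rfl | rfl
  exacts [hb, hc]

/-- last visit to `C` with clean tail afterwards -/
lemma walk_last_mem (C : Set V) {a b : V} (w : G.Walk a b) :
    (∀ x ∈ w.support, x ∉ C) ∨
    ∃ q ∈ C, ∃ w2 : G.Walk q b, (∀ x ∈ w2.support, x ∈ w.support) ∧
      (∀ x ∈ w2.support.tail, x ∉ C) := by
  induction w with
  | nil =>
    rename_i u
    by_cases hu : u ∈ C
    · exact Or.inr ⟨u, hu, Walk.nil, by simp, by simp⟩
    · exact Or.inl (by simpa using hu)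
  | cons h p ih =>
    rename_i u1 u2 u3
    rcases ih with h1 | ⟨q, hq, w2, hsub, htail⟩
    · by_cases hu : u1 ∈ C
      · refine Or.inr ⟨u1, hu, Walk.cons h p, fun x hx => hx, ?_⟩
        simpa [Walk.support_cons] using h1
      · refine Or.inl ?_
        intro x hx
        rw [Walk.support_cons] at hx
        rcases List.mem_cons.mp hx with rfl | hx
        · exact hu
        · exact h1 x hx
    · exact Or.inr ⟨q, hq, w2,
        fun x hx => by rw [Walk.support_cons]; exact List.mem_cons_of_mem _ (hsub x hx), htail⟩

/-- a visit to `C` with a walk to it meeting `C` only at its end -/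
lemma walk_first_mem (C : Set V) {a b : V} (w : G.Walk a b) :
    (∀ x ∈ w.support, x ∉ C) ∨
    ∃ q ∈ C, ∃ w1 : G.Walk a q, (∀ x ∈ w1.support, x ∈ w.support) ∧
      (∀ x ∈ w1.support, x ∈ C → x = q) := by
  induction w with
  | nil =>
    rename_i u
    by_cases hu : u ∈ C
    · exact Or.inr ⟨u, hu, Walk.nil, by simp, by simp⟩
    · exact Or.inl (by simpa using hu)
  | cons h p ih =>
    rename_i u1 u2 u3
    by_cases hu : u1 ∈ C
    · exact Or.inr ⟨u1, hu, Walk.nil, by simp [Walk.support_cons], by simp⟩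
    · rcases ih with h1 | ⟨q, hq, w1, hsub, hcl⟩
      · refine Or.inl ?_
        intro x hx
        rw [Walk.support_cons] at hx
        rcases List.mem_cons.mp hx with rfl | hx
        · exact hu
        · exact h1 x hx
      · refine Or.inr ⟨q, hq, Walk.cons h w1, ?_, ?_⟩
        · intro x hx
          rw [Walk.support_cons] at hx ⊢
          rcases List.mem_cons.mp hx with rfl | hx
          · exact List.mem_cons_self
          · exact List.mem_cons_of_mem _ (hsub x hx)
        · intro x hx hxC
          rw [Walk.support_cons] at hx
          rcases List.mem_cons.mp hx with rfl | hx
          · exact absurd hxC hu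
          · exact hcl x hx hxC

/-- a walk into `A ∪ {b}` ends at `b` or has a reachable `A`-vertex adjacent to `b` -/
lemma walk_into (A : Set V) {a b : V} (w : G.Walk a b) :
    a ∈ A → (∀ x ∈ w.support, x ∈ A ∨ x = b) →
    ∃ c ∈ A, ReachIn G A a c ∧ (c = b ∨ G.Adj c b) := by
  induction w with
  | nil =>
    rename_i u
    exact fun hu _ => ⟨u, hu, reachIn_refl hu, Or.inl rfl⟩
  | cons h p ih =>
    rename_i u1 u2 u3
    intro ha hsup
    by_cases hb : u3 ∈ A
    · refine ⟨u3, hb, ⟨Walk.cons h p, fun x hx => ?_⟩, Or.inl rfl⟩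
      rcases hsup x hx with hx' | rfl
      exacts [hx', hb]
    · have hu : u2 ∈ A ∨ u2 = u3 :=
        hsup u2 (by rw [Walk.support_cons]; exact List.mem_cons_of_mem _ p.start_mem_support)
      rcases hu with hu | rfl
      · obtain ⟨c, hc, hr, hcb⟩ :=
          ih hu (fun x hx => hsup x (by rw [Walk.support_cons]; exact List.mem_cons_of_mem _ hx))
        refine ⟨c, hc, reachIn_trans ⟨Walk.cons h Walk.nil, ?_⟩ hr, hcb⟩
        intro x hx
        simp [Walk.support_cons] at hx
        rcases hx with rfl | rfl
        exacts [ha, hu]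
      · exact ⟨u1, ha, reachIn_refl ha, Or.inr h⟩

/-- every vertex of a minimum left-restricted separator is attached to `S`. -/
lemma attach [Fintype V] {S T Q : Set V}
    (hQ : IsMinLeftSep G S T Q) {q : V} (hq : q ∈ Q) :
    ∃ s ∈ S \ Q, ∃ w : G.Walk s q, ∀ x ∈ w.support, x ∈ Q → x = q := by
  by_contra hcon
  push_neg at hcon
  have hsep : IsLeftSep G S T (Q \ {q}) := by
    constructor
    · rintro s ⟨hsS, hs⟩ t ⟨htT, ht⟩ ⟨w, hw⟩
      have hsQ : s ∉ Q := fun h =>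
        (Set.eq_empty_iff_forall_notMem.mp hQ.1.2 s) ⟨h, hsS⟩
      rcases walk_first_mem Q w with hnone | ⟨q', hq', w1, hsub, hcl⟩
      · have htQ : t ∉ Q := hnone t w.end_mem_support
        exact hQ.1.1 s ⟨hsS, hsQ⟩ t ⟨htT, htQ⟩ ⟨w, fun x hx => hnone x hx⟩
      · have hq'q : q' = q := by
          have := hw q' (hsub q' w1.end_mem_support)
          simp [Set.mem_diff] at this
          exact this hq'
        subst hq'q
        obtain ⟨x, hx, hxQ, hxq⟩ := hcon s ⟨hsS, hsQ⟩ w1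
        exact hxq (hcl x hx hxQ)
    · have : Q \ {q} ∩ S ⊆ Q ∩ S := fun x hx => ⟨hx.1.1, hx.2⟩
      rw [hQ.1.2] at this
      exact Set.subset_empty_iff.mp this
  have h1 := hQ.2 _ hsep
  have h2 : (Q \ {q}).ncard < Q.ncard :=
    Set.ncard_diff_singleton_lt_of_mem hq (Set.toFinite Q)
  omega

/-- a separator vertex outside `Pp` lies in the reach of `S` past `Pp`. -/
lemma mem_reach_of_sep_vertex [Fintype V] {S T Q Pp : Set V}
    (hQ : IsMinLeftSep G S T Q) (hsub : reachSet G S Q ⊆ reachSet G S Pp)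
    {q : V} (hq : q ∈ Q) (hqP : q ∉ Pp) : q ∈ reachSet G S Pp := by
  obtain ⟨s, hs, w, hw⟩ := attach hQ hq
  obtain ⟨c, hcA, hr, hcb⟩ := walk_into Qᶜ w hs.2 (fun x hx => by
    by_cases hxQ : x ∈ Q
    · exact Or.inr (hw x hx hxQ)
    · exact Or.inl hxQ)
  have hc : c ∈ reachSet G S Pp := hsub ⟨s, hs, hr⟩
  rcases hcb with rfl | hadj
  · exact hc
  · obtain ⟨s', hs', hr'⟩ := hc
    exact ⟨s', hs', reachIn_adj hr' hadj hqP⟩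

/-- the core contradiction -/
lemma core [Fintype V] {S T Pp Q : Set V} {v t : V}
    (hPp : IsMinLeftSep G S T Pp)
    (hQ : IsMinLeftSep G S T Q)
    (hsub : reachSet G S Q ⊆ reachSet G S Pp)
    (hQsep : IsSep G (S ∪ {v}) T Q) (hvQ : v ∉ Q)
    (ht : t ∈ T) (w : G.Walk v t) (hw : ∀ x ∈ w.support, x ∈ Pp → x = v) : False := by
  rcases walk_last_mem (Q ∪ {v}) w with hnone | ⟨q, hqC, w3, hsub3, htail⟩
  · exact hnone v w.start_mem_support (Or.inr rfl)
  · have hsupp3 : w3.support = q :: w3.support.tail := w3.support_eq_cons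
    rcases hqC with hqQ | hqv
    · -- q ∈ Q, so q ≠ v, q ∉ Pp
      have hqv : q ≠ v := fun h => hvQ (h ▸ hqQ)
      have hqP : q ∉ Pp := fun h => hqv (hw q (hsub3 q w3.start_mem_support) h)
      have h3P : ∀ x ∈ w3.support, x ∈ Ppᶜ := by
        intro x hx
        rw [hsupp3] at hx
        rcases List.mem_cons.mp hx with rfl | hx
        · exact hqP
        · have hxv : x ≠ v := fun h => (htail x hx) (Or.inr h)
          have hxw : x ∈ w.support := hsub3 x (hsupp3 ▸ List.mem_cons_of_mem _ hx)
          exact fun hxP => hxv (hw x hxw hxP)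
      have htP : t ∉ Pp := h3P t w3.end_mem_support
      obtain ⟨s', hs', hr⟩ := mem_reach_of_sep_vertex hQ hsub hqQ hqP
      exact hPp.1.1 s' hs' t ⟨ht, htP⟩ (reachIn_trans hr ⟨w3, h3P⟩)
    · -- q = v
      have hqv : q = v := hqv
      subst hqv
      have h3Q : ∀ x ∈ w3.support, x ∈ Qᶜ := by
        intro x hx
        rw [hsupp3] at hx
        rcases List.mem_cons.mp hx with rfl | hx
        · exact hvQ
        · exact fun hxQ => (htail x hx) (Or.inl hxQ)
      have htQ : t ∉ Q := h3Q t w3.end_mem_support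
      exact hQsep q ⟨Or.inr rfl, hvQ⟩ t ⟨ht, htQ⟩ ⟨w3, h3Q⟩

end helpers

/-- Adding a vertex to `S` increases `λ^L` iff it lies in the far side of (or on)
the farthest minimum left-restricted separator. -/
theorem stmt5 {V : Type} [Fintype V] (G : SimpleGraph V) (S T : Set V)
    (hdisj : Disjoint S T) (Pp : Set V)
    (hPp : IsMinLeftSep G S T Pp)
    (hfar : ∀ P : Set V, IsMinLeftSep G S T P → reachSet G S P ⊆ reachSet G S Pp) :
    ∀ v : V, lamL G S T < lamL G (S ∪ {v}) T ↔ v ∈ reachSet G T Pp ∪ Pp := by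
  intro v
  have hPpS : Pp ∩ S = ∅ := hPp.1.2
  have hlam : lamL G S T = (Pp.ncard : ℕ∞) :=
    le_antisymm (iInf₂_le Pp hPp.1) (le_iInf₂ fun Q hQ => Nat.cast_le.mpr (hPp.2 Q hQ))
  constructor
  · intro hlt
    by_contra hv
    simp only [Set.mem_union, not_or] at hv
    have hls : IsLeftSep G (S ∪ {v}) T Pp := by
      constructor
      · rintro s ⟨hsU, hsP⟩ t ⟨htT, htP⟩ hr
        rcases hsU with hsS | hsv
        · exact hPp.1.1 s ⟨hsS, hsP⟩ t ⟨htT, htP⟩ hr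
        · have hsv : s = v := hsv
          subst hsv
          exact hv.1 ⟨t, ⟨htT, htP⟩, reachIn_reverse hr⟩
      · apply Set.subset_empty_iff.mp
        rintro x ⟨hxP, hxU⟩
        rcases hxU with hxS | hxv
        · exact (Set.eq_empty_iff_forall_notMem.mp hPpS x) ⟨hxP, hxS⟩
        · exact hv.2 (hxv ▸ hxP)
    have hle : lamL G (S ∪ {v}) T ≤ (Pp.ncard : ℕ∞) := iInf₂_le Pp hls
    rw [hlam] at hlt
    exact absurd (lt_of_lt_of_le hlt hle) (lt_irrefl _)
  · intro hv
    rw [hlam]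
    by_contra hle
    push_neg at hle
    have hex : ∃ Q, IsLeftSep G (S ∪ {v}) T Q ∧ Q.ncard ≤ Pp.ncard := by
      by_contra h
      push_neg at h
      have h1 : ((Pp.ncard + 1 : ℕ) : ℕ∞) ≤ lamL G (S ∪ {v}) T :=
        le_iInf₂ fun Q hQ => Nat.cast_le.mpr (h Q hQ)
      have h2 := le_trans h1 hle
      exact absurd (Nat.cast_le.mp h2) (by omega)
    obtain ⟨Q, hQls, hQcard⟩ := hex
    have hQS : IsLeftSep G S T Q := by
      constructor
      · exact fun s hs t ht => hQls.1 s ⟨Or.inl hs.1, hs.2⟩ t ht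
      · apply Set.subset_empty_iff.mp
        rintro x ⟨hxQ, hxS⟩
        exact (Set.eq_empty_iff_forall_notMem.mp hQls.2 x) ⟨hxQ, Or.inl hxS⟩
    have hQmin : IsMinLeftSep G S T Q := ⟨hQS, fun R hR => le_trans hQcard (hPp.2 R hR)⟩
    have hsubQ := hfar Q hQmin
    have hvQ : v ∉ Q := fun h =>
      (Set.eq_empty_iff_forall_notMem.mp hQls.2 v) ⟨h, Or.inr rfl⟩
    rcases hv with hvT | hvP
    · obtain ⟨t, ⟨htT, htP⟩, hr⟩ := hvT
      obtain ⟨w, hw⟩ := reachIn_reverse hr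
      exact core hPp hQmin hsubQ hQls.1 hvQ htT w (fun x hx h => absurd h (hw x hx))
    · have hns : ¬ IsLeftSep G S T (Pp \ {v}) := by
        intro h
        have h1 := hPp.2 _ h
        have h2 : (Pp \ {v}).ncard < Pp.ncard :=
          Set.ncard_diff_singleton_lt_of_mem hvP (Set.toFinite Pp)
        omega
      have hnsep : ¬ IsSep G S T (Pp \ {v}) := by
        intro h
        apply hns
        refine ⟨h, ?_⟩
        apply Set.subset_empty_iff.mp
        rintro x ⟨⟨hxP, _⟩, hxS⟩
        exact (Set.eq_empty_iff_forall_notMem.mp hPpS x) ⟨hxP, hxS⟩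
      rw [IsSep] at hnsep
      push_neg at hnsep
      obtain ⟨s, hs, t, ht, hr⟩ := hnsep
      obtain ⟨w, hw⟩ := hr
      have hsS : s ∈ S := hs.1
      have hsP : s ∉ Pp := fun h =>
        (Set.eq_empty_iff_forall_notMem.mp hPpS s) ⟨h, hsS⟩
      rcases walk_last_mem Pp w with hnone | ⟨q, hqP, w2, hsub2, htail2⟩
      · exact hPp.1.1 s ⟨hsS, hsP⟩ t ⟨ht.1, hnone t w.end_mem_support⟩
          ⟨w, fun x hx => hnone x hx⟩
      · have hqv : q = v := by
          have := hw q (hsub2 q w2.start_mem_support)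
          simp [Set.mem_diff] at this
          exact this hqP
        subst hqv
        apply core hPp hQmin hsubQ hQls.1 hvQ ht.1 w2
        intro x hx hxP
        rw [w2.support_eq_cons] at hx
        rcases List.mem_cons.mp hx with rfl | hx
        · rfl
        · exact absurd hxP (htail2 x hx)
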